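/- Let c ∈ F_q with x^2 − x − c irreducible over F_q, A = [[0,1],[c,1]], D the order of [A] in PGL_2(F_q), and j, m positive integers with j ≤ D−1 and gcd(j, D) = 1. Write A^j = [[a_j, b_j],[c_j, d_j]] and let F_{A^j,m}(x) = b_j x^{q^m+1} − a_j x^{q^m} + d_j x − c_j. Then F_{A^j,m} has degree q^m + 1 and has no root in F_q. -/
import Mathlib

open Polynomial

variable {F : Type*} [Field F] [Fintype F]

/-- The order of `[A]` in `PGL₂(F)`: the least `D ≥ 1` such that `A ^ D` is a
(nonzero) scalar matrix. -/
noncomputable def pglOrder (A : Matrix (Fin 2) (Fin 2) F) : ℕ :=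
  sInf {D : ℕ | 0 < D ∧ ∃ c : F, c ≠ 0 ∧ A ^ D = c • (1 : Matrix (Fin 2) (Fin 2) F)}

/-- For `B = [[a,b],[c,d]]`, the polynomial `F_{B,r} = b x^{q^r+1} - a x^{q^r} + d x - c`. -/
noncomputable def FPoly (B : Matrix (Fin 2) (Fin 2) F) (r : ℕ) : F[X] :=
  C (B 0 1) * X ^ (Fintype.card F ^ r + 1) - C (B 0 0) * X ^ (Fintype.card F ^ r) +
    C (B 1 1) * X - C (B 1 0)

omit [Fintype F] in
lemma aux_no_root (c : F) (hirr : Irreducible (X ^ 2 - X - C c)) (x : F) :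
    x ^ 2 - x - c ≠ 0 := by
  intro hx
  have hroot : (X ^ 2 - X - C c).IsRoot x := by
    simp [IsRoot, hx]
  have hdvd : (X - C x) ∣ (X ^ 2 - X - C c) := dvd_iff_isRoot.mpr hroot
  obtain ⟨q, hq⟩ := hdvd
  have hdeg : (X ^ 2 - X - C c).natDegree = 2 := by
    compute_degree!
  have hne : (X ^ 2 - X - C c : F[X]) ≠ 0 := by
    intro h; rw [h] at hdeg; simp at hdeg
  rcases hirr.isUnit_or_isUnit hq with h | h
  · exact Polynomial.not_isUnit_X_sub_C x h
  · have hq0 : q ≠ 0 := by rintro rfl; simp at hq; exact hne hq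
    have := Polynomial.natDegree_eq_zero_of_isUnit h
    have hmul : (X ^ 2 - X - C c).natDegree = (X - C x).natDegree + q.natDegree := by
      rw [hq, natDegree_mul (X_sub_C_ne_zero x) hq0]
    rw [hdeg, natDegree_X_sub_C, this] at hmul
    omega

theorem FPoly_degree_no_linear_factor (c : F) (hirr : Irreducible (X ^ 2 - X - C c))
    (A : Matrix (Fin 2) (Fin 2) F) (hA : A = !![0, 1; c, 1])
    (j m : ℕ) (hj1 : 1 ≤ j) (hj2 : j ≤ pglOrder A - 1) (hjD : Nat.gcd j (pglOrder A) = 1)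
    (hm : 1 ≤ m) :
    (FPoly (A ^ j) m).natDegree = Fintype.card F ^ m + 1 ∧
    ∀ x : F, (FPoly (A ^ j) m).eval x ≠ 0 := by
  have hc : c ≠ 0 := by
    intro h
    have := aux_no_root c hirr 0
    simp [h] at this
  -- A^2 = A + c • 1
  have hA2 : A ^ 2 = A + c • (1 : Matrix (Fin 2) (Fin 2) F) := by
    subst hA
    ext i k
    fin_cases i <;> fin_cases k <;>
      simp [pow_two, Matrix.mul_apply, Fin.sum_univ_two, Matrix.one_apply, Matrix.smul_apply] <;> ring
  -- A^j = u • 1 + v • A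
  have key : ∀ n : ℕ, ∃ u v : F, A ^ n = u • (1 : Matrix (Fin 2) (Fin 2) F) + v • A := by
    intro n
    induction n with
    | zero => exact ⟨1, 0, by simp⟩
    | succ k ih =>
      obtain ⟨u, v, h⟩ := ih
      refine ⟨v * c, u + v, ?_⟩
      rw [pow_succ, h, add_mul, Matrix.smul_mul, Matrix.smul_mul, one_mul,
        show A * A = A ^ 2 by rw [pow_two], hA2]
      rw [smul_add, smul_smul]
      module
  obtain ⟨u, v, huv⟩ := key j
  -- entries
  have e00 : (A ^ j) 0 0 = u := by rw [huv, hA]; simp [Matrix.one_apply]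
  have e01 : (A ^ j) 0 1 = v := by rw [huv, hA]; simp [Matrix.one_apply]
  have e10 : (A ^ j) 1 0 = v * c := by rw [huv, hA]; simp [Matrix.one_apply]
  have e11 : (A ^ j) 1 1 = u + v := by rw [huv, hA]; simp [Matrix.one_apply]
  -- v ≠ 0
  have hdetA : A.det = -c := by rw [hA]; simp [Matrix.det_fin_two]
  have hv : v ≠ 0 := by
    rintro rfl
    simp only [zero_smul, add_zero] at huv
    have hu : u ≠ 0 := by
      rintro rfl
      have : (A ^ j).det = 0 := by rw [huv]; simp
      rw [Matrix.det_pow, hdetA] at this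
      exact (pow_ne_zero j (neg_ne_zero.mpr hc)) this
    have hjmem : j ∈ {D : ℕ | 0 < D ∧ ∃ c : F, c ≠ 0 ∧
        A ^ D = c • (1 : Matrix (Fin 2) (Fin 2) F)} := ⟨hj1, u, hu, huv⟩
    have hle : pglOrder A ≤ j := Nat.sInf_le hjmem
    have hpos : 0 < pglOrder A := (Nat.sInf_mem ⟨j, hjmem⟩).1
    omega
  have hq1 : 1 < Fintype.card F ^ m := by
    calc 1 < Fintype.card F := Fintype.one_lt_card
    _ ≤ Fintype.card F ^ m := Nat.le_self_pow (by omega) _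
  constructor
  · unfold FPoly
    rw [e00, e01, e10, e11]
    compute_degree!
    all_goals omega
  · intro x hx
    unfold FPoly at hx
    rw [e00, e01, e10, e11] at hx
    simp only [eval_sub, eval_add, eval_mul, eval_C, eval_pow, eval_X] at hx
    rw [FiniteField.pow_card_pow, pow_succ, FiniteField.pow_card_pow] at hx
    have : v * ((-x) ^ 2 - (-x) - c) = 0 := by ring_nf; ring_nf at hx; linear_combination hx
    have h2 := aux_no_root c hirr (-x)
    rcases mul_eq_zero.mp this with h | h
    · exact hv h
    · exact h2 h
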